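/- Let (v_1, …, v_n) be a perfect elimination order of a chordal graph G, and let v_i be any vertex with i < n. Then every shortest path from v_i to v_n in G visits vertices with strictly increasing indices. -/

import Mathlib

/-- The identity ordering on `Fin n` is a perfect elimination order of `G`:
each vertex `i` is simplicial in the subgraph induced by `{i, i+1, …}`,
i.e. any two neighbors of `i` with larger index are adjacent. -/
def IsPEO {n : ℕ} (G : SimpleGraph (Fin n)) : Prop :=
  ∀ i j k : Fin n, i < j → i < k → j ≠ k → G.Adj i j → G.Adj i k → G.Adj j k

/-- In a chordal graph with perfect elimination order `(v_0, …, v_n)`, every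
shortest path from `v_i` (with `i < n`) to the last vertex `v_n` visits
vertices with strictly increasing indices. -/
theorem shortest_path_increasing_of_peo {n : ℕ} (G : SimpleGraph (Fin (n + 1)))
    (hpeo : IsPEO G) (i : Fin (n + 1)) (hi : i < Fin.last n)
    (p : G.Walk i (Fin.last n)) (hp : p.IsPath)
    (hshort : ∀ q : G.Walk i (Fin.last n), p.length ≤ q.length) :
    p.support.Chain' (· < ·) := by
  have key : ∀ (i l : Fin (n + 1)) (p : G.Walk i l), l = Fin.last n → i < l → p.IsPath →
      (∀ q : G.Walk i l, p.length ≤ q.length) → p.support.Chain' (· < ·) := by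
    intro i l p
    induction p with
    | nil => intro _ hi _ _; exact absurd hi (lt_irrefl _)
    | @cons a b l h q ih =>
      intro hl hi hp hshort
      subst hl
      rw [SimpleGraph.Walk.cons_isPath_iff] at hp
      obtain ⟨hqp, hnmem⟩ := hp
      have hshortq : ∀ q' : G.Walk b (Fin.last n), q.length ≤ q'.length := by
        intro q'
        have := hshort (SimpleGraph.Walk.cons h q')
        simpa using this
      rcases (Fin.le_last b).lt_or_eq with hblt | hbeq
      · have hq : q.support.Chain' (· < ·) := ih rfl hblt hqp hshortq
        have hab : a < b := by
          by_contra hni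
          have hne : a ≠ b := h.ne
          have hba : b < a := lt_of_le_of_ne (not_lt.mp hni) (Ne.symm hne)
          cases q with
          | nil => exact absurd hblt (lt_irrefl _)
          | @cons _ c _ h' q' =>
            have hbc : b < c := by
              rw [SimpleGraph.Walk.support_cons, q'.support_eq_cons] at hq
              exact (List.isChain_cons_cons.mp hq).1
            have hac : a ≠ c := by
              intro he
              apply hnmem
              rw [SimpleGraph.Walk.support_cons]
              exact List.mem_cons_of_mem _ (he ▸ q'.start_mem_support)
            have hadj : G.Adj a c := hpeo b a c hba hbc hac h.symm h'
            have := hshort (SimpleGraph.Walk.cons hadj q')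
            simp [SimpleGraph.Walk.length_cons] at this
        rw [SimpleGraph.Walk.support_cons, q.support_eq_cons]
        refine List.isChain_cons_cons.mpr ⟨hab, ?_⟩
        rw [← q.support_eq_cons]
        exact hq
      · subst hbeq
        have : q = SimpleGraph.Walk.nil := SimpleGraph.Walk.isPath_iff_eq_nil.mp hqp
        subst this
        simp [List.Chain', List.isChain_cons_cons, hi]
  exact key i (Fin.last n) p rfl hi hp hshort
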